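/- Let K be a field with a henselian discrete valuation w whose residue field κ has characteristic ≠ 2, and let ℓ ≥ 1. If either s(κ) ≤ 2^{ℓ-1}, or κ is real with Pythagoras number p(κ) ≤ 2^ℓ, then ρ_ℓ(K) = 0, i.e., every nonzero sum of 2^{ℓ+1} squares in K is a sum of 2^ℓ squares. -/

import Mathlib

open IsLocalRing Polynomial Finset

/-- The set of elements of `K` that are sums of `m` squares. -/
def sosN (K : Type*) [Field K] (m : ℕ) : Set K :=
  {x | ∃ f : Fin m → K, x = ∑ i, f i ^ 2}

lemma sosN_mono {K : Type*} [Field K] {m n : ℕ} (h : m ≤ n) : sosN K m ⊆ sosN K n := by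
  rintro x ⟨f, rfl⟩
  set F : ℕ → K := fun i => if h : i < m then f ⟨i, h⟩ else 0 with hF
  refine ⟨fun i => F i, ?_⟩
  rw [Fin.sum_univ_eq_sum_range (fun i => F i ^ 2)]
  rw [← Finset.sum_range_add_sum_Ico _ h]
  have h1 : ∑ i ∈ Finset.Ico m n, F i ^ 2 = 0 := by
    apply Finset.sum_eq_zero
    intro i hi
    have hm := Finset.mem_Ico.mp hi
    simp only [hF]
    rw [dif_neg (by omega)]
    ring
  rw [h1, add_zero, ← Fin.sum_univ_eq_sum_range (fun i => F i ^ 2)]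
  refine Finset.sum_congr rfl fun i _ => ?_
  simp only [hF]
  rw [dif_pos i.isLt]

lemma lift_sos {O : Type*} [CommRing O] [HenselianLocalRing O]
    (hchar : (2 : ResidueField O) ≠ 0)
    {m : ℕ} {u : O} (hu : residue O u ≠ 0)
    (hres : residue O u ∈ sosN (ResidueField O) m) :
    ∃ b : Fin m → O, u = ∑ i, b i ^ 2 := by
  obtain ⟨c, hc⟩ := hres
  choose d hd using fun i => residue_surjective (R := O) (c i)
  set e : O := ∑ i, d i ^ 2 with he
  have hre : residue O e = residue O u := by
    rw [he, map_sum, hc]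
    exact Finset.sum_congr rfl fun i _ => by rw [map_pow, hd]
  have heu : IsUnit e := by
    rw [← IsLocalRing.notMem_maximalIdeal]
    intro hmem
    exact hu (hre ▸ Ideal.Quotient.eq_zero_iff_mem.mpr hmem)
  obtain ⟨E, hE⟩ := heu
  set v : O := ↑E⁻¹ * u with hv
  have hrv : residue O v = 1 := by
    have h1 : residue O ↑E * residue O (↑E⁻¹ : O) = 1 := by
      rw [← map_mul, E.mul_inv, map_one]
    have h2 : residue O (↑E : O) = residue O u := by rw [hE, hre]
    rw [hv, map_mul, ← h2, mul_comm]
    exact h1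
  have h2u : IsUnit (2 : O) := by
    rw [← IsLocalRing.notMem_maximalIdeal]
    intro hmem
    exact hchar (by simpa only [map_ofNat] using (IsLocalRing.residue_eq_zero_iff (2 : O)).mpr hmem)
  obtain ⟨a, ha, -⟩ := HenselianLocalRing.is_henselian (X ^ 2 - C v)
    (monic_X_pow_sub_C v two_ne_zero) 1
    (by
      rw [← Ideal.Quotient.eq_zero_iff_mem]
      show residue O _ = 0
      simp [hrv])
    (by simpa [one_add_one_eq_two] using h2u)
  have ha' : a ^ 2 = v := by
    have := ha
    simp only [IsRoot, eval_sub, eval_pow, eval_X, eval_C, sub_eq_zero] at this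
    exact this
  refine ⟨fun i => d i * a, ?_⟩
  have : ∑ i, (d i * a) ^ 2 = e * a ^ 2 := by
    rw [he, Finset.sum_mul]
    exact Finset.sum_congr rfl fun i _ => by ring
  rw [this, ha', hv, ← hE, ← mul_assoc, E.mul_inv, one_mul]

lemma finset_min {K O : Type*} [Field K] [CommRing O] [IsDomain O]
    [IsDiscreteValuationRing O] [Algebra O K] [IsFractionRing O K]
    (s : Finset K) : s.Nonempty → (∀ y ∈ s, y ≠ 0) →
    ∃ x ∈ s, ∀ y ∈ s, ∃ a : O, algebraMap O K a = y / x := by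
  classical
  induction s using Finset.induction_on with
  | empty => intro hs _; exact absurd hs (by simp)
  | @insert z s hz ih =>
    intro _ h0
    rcases s.eq_empty_or_nonempty with rfl | hsne
    · refine ⟨z, by simp, ?_⟩
      intro y hy
      simp only [Finset.mem_insert, Finset.notMem_empty, or_false] at hy
      exact ⟨1, by rw [map_one, hy, div_self (h0 z (by simp))]⟩
    · obtain ⟨x, hxs, hx⟩ := ih hsne (fun y hy => h0 y (Finset.mem_insert_of_mem hy))
      have hzne : z ≠ 0 := h0 z (Finset.mem_insert_self z _)
      have hxne : x ≠ 0 := h0 x (Finset.mem_insert_of_mem hxs)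
      rcases ValuationRing.isInteger_or_isInteger O (x / z) with ⟨c, hc⟩ | ⟨c, hc⟩
      · refine ⟨z, Finset.mem_insert_self z _, ?_⟩
        intro y hy
        rcases Finset.mem_insert.mp hy with rfl | hy
        · exact ⟨1, by rw [map_one, div_self hzne]⟩
        · obtain ⟨b, hb⟩ := hx y hy
          refine ⟨b * c, ?_⟩
          rw [map_mul, hb, hc]
          field_simp
      · rw [inv_div] at hc
        refine ⟨x, Finset.mem_insert_of_mem hxs, ?_⟩
        intro y hy
        rcases Finset.mem_insert.mp hy with rfl | hy
        · exact ⟨c, hc⟩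
        · exact hx y hy

lemma exists_dominator {K O : Type*} [Field K] [CommRing O] [IsDomain O]
    [IsDiscreteValuationRing O] [Algebra O K] [IsFractionRing O K]
    {n : ℕ} (f : Fin n → K) (hne : ∃ i, f i ≠ 0) :
    ∃ i₀, f i₀ ≠ 0 ∧ ∀ j, ∃ a : O, algebraMap O K a = f j / f i₀ := by
  classical
  obtain ⟨i, hi⟩ := hne
  set s : Finset K := (Finset.univ.image f).erase 0 with hs
  have hsne : s.Nonempty :=
    ⟨f i, Finset.mem_erase.mpr ⟨hi, Finset.mem_image_of_mem f (Finset.mem_univ i)⟩⟩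
  obtain ⟨x, hxs, hx⟩ := finset_min (O := O) s hsne (fun y hy => (Finset.mem_erase.mp hy).1)
  obtain ⟨hxne, hxim⟩ := Finset.mem_erase.mp hxs
  obtain ⟨i₀, -, hi₀⟩ := Finset.mem_image.mp hxim
  subst hi₀
  refine ⟨i₀, hxne, fun j => ?_⟩
  by_cases hj : f j = 0
  · exact ⟨0, by rw [map_zero, hj, zero_div]⟩
  · exact hx (f j) (Finset.mem_erase.mpr ⟨hj, Finset.mem_image_of_mem f (Finset.mem_univ j)⟩)

/-- let `K` be a field with a henselian discrete valuation whose valuation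
ring is `O` and whose residue field `κ` has characteristic `≠ 2`, and let `ℓ ≥ 1`.
If either the level `s(κ) ≤ 2^(ℓ-1)` (i.e. `-1` is a sum of `2^(ℓ-1)` squares in `κ`),
or `κ` is real with Pythagoras number `p(κ) ≤ 2^ℓ` (i.e. every sum of squares in `κ` is
a sum of `2^ℓ` squares), then every nonzero sum of `2^(ℓ+1)` squares in `K` is a sum of
`2^ℓ` squares, i.e. `ρ_ℓ(K) = 0`. -/
theorem stmt9 {K O : Type*} [Field K] [CommRing O] [IsDomain O]
    [IsDiscreteValuationRing O] [HenselianLocalRing O]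
    [Algebra O K] [IsFractionRing O K] (ℓ : ℕ) (hℓ : 1 ≤ ℓ)
    (hchar : (2 : IsLocalRing.ResidueField O) ≠ 0)
    (h : ((-1 : IsLocalRing.ResidueField O) ∈
            sosN (IsLocalRing.ResidueField O) (2 ^ (ℓ - 1))) ∨
      ((∀ m, (-1 : IsLocalRing.ResidueField O) ∉ sosN (IsLocalRing.ResidueField O) m) ∧
        ∀ x : IsLocalRing.ResidueField O,
          (∃ n, x ∈ sosN (IsLocalRing.ResidueField O) n) →
            x ∈ sosN (IsLocalRing.ResidueField O) (2 ^ ℓ))) :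
    ∀ x : K, x ≠ 0 → x ∈ sosN K (2 ^ (ℓ + 1)) → x ∈ sosN K (2 ^ ℓ) := by
  classical
  rcases h with hleft | ⟨hreal, hpyth⟩
  · -- level case: every element of K is a sum of 2^ℓ squares
    intro x _ _
    have hm1 : residue O (-1 : O) ≠ 0 := by
      rw [map_neg, map_one]
      exact neg_ne_zero.mpr one_ne_zero
    have hres : residue O (-1 : O) ∈ sosN (ResidueField O) (2 ^ (ℓ - 1)) := by
      rw [map_neg, map_one]; exact hleft
    obtain ⟨b, hb⟩ := lift_sos hchar hm1 hres
    have hbK : (-1 : K) = ∑ i, (algebraMap O K (b i)) ^ 2 := by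
      have := congrArg (algebraMap O K) hb
      simpa [map_sum, map_pow] using this
    have h2K : (2 : K) ≠ 0 := by
      intro h2
      have h2O : (2 : O) = 0 := by
        apply IsFractionRing.injective O K
        rw [map_ofNat, map_zero]
        exact h2
      exact hchar (by rw [show (2 : ResidueField O) = residue O 2 from (map_ofNat _ 2).symm, h2O, map_zero])
    have hle : 2 ^ (ℓ - 1) + 1 ≤ 2 ^ ℓ := by
      have e1 : 2 ^ ℓ = 2 ^ (ℓ - 1) * 2 := by
        conv_lhs => rw [show ℓ = (ℓ - 1) + 1 by omega]
        rw [pow_succ]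
      have e2 : 1 ≤ 2 ^ (ℓ - 1) := Nat.one_le_two_pow
      omega
    apply sosN_mono hle
    refine ⟨Fin.cons ((x + 1) / 2) (fun i => algebraMap O K (b i) * ((x - 1) / 2)), ?_⟩
    rw [Fin.sum_univ_succ]
    simp only [Fin.cons_zero, Fin.cons_succ]
    have hsum : ∑ i, (algebraMap O K (b i) * ((x - 1) / 2)) ^ 2
        = (∑ i, (algebraMap O K (b i)) ^ 2) * ((x - 1) / 2) ^ 2 := by
      rw [Finset.sum_mul]
      exact Finset.sum_congr rfl fun i _ => by ring
    rw [hsum, ← hbK]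
    field_simp
    ring
  · -- real case
    intro x hx hx2
    obtain ⟨f, hf⟩ := hx2
    have hne : ∃ i, f i ≠ 0 := by
      by_contra hall
      push_neg at hall
      apply hx
      rw [hf]
      exact Finset.sum_eq_zero fun i _ => by rw [hall i]; ring
    obtain ⟨i₀, h0, hint⟩ := exists_dominator (O := O) f hne
    choose a ha using hint
    have hai : a i₀ = 1 := by
      apply IsFractionRing.injective O K
      rw [ha, div_self h0, map_one]
    set y : O := ∑ j, a j ^ 2 with hy
    have hry : residue O y = ∑ j, residue O (a j) ^ 2 := by
      rw [hy, map_sum]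
      exact Finset.sum_congr rfl fun j _ => map_pow _ _ _
    have hyne : residue O y ≠ 0 := by
      intro h0'
      apply hreal (2 ^ (ℓ + 1))
      refine ⟨fun j => if j = i₀ then 0 else residue O (a j), ?_⟩
      have hterm : ∀ j : Fin (2 ^ (ℓ + 1)),
          (if j = i₀ then (0 : ResidueField O) else residue O (a j)) ^ 2
            = residue O (a j) ^ 2 - (if j = i₀ then 1 else 0) := by
        intro j
        by_cases hj : j = i₀
        · subst hj; simp [hai]
        · simp [hj]
      rw [Finset.sum_congr rfl (fun j _ => hterm j), Finset.sum_sub_distrib, ← hry, h0',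
        Finset.sum_ite_eq' Finset.univ i₀ (fun _ => (1 : ResidueField O))]
      simp
    have hys : residue O y ∈ sosN (ResidueField O) (2 ^ ℓ) :=
      hpyth _ ⟨2 ^ (ℓ + 1), ⟨fun j => residue O (a j), hry⟩⟩
    obtain ⟨b, hb⟩ := lift_sos hchar hyne hys
    refine ⟨fun i => f i₀ * algebraMap O K (b i), ?_⟩
    have hyK : algebraMap O K y = x / f i₀ ^ 2 := by
      rw [hy, map_sum]
      have h1 : ∀ j, algebraMap O K (a j ^ 2) = (f j / f i₀) ^ 2 := fun j => by
        rw [map_pow, ha]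
      rw [Finset.sum_congr rfl fun j _ => h1 j, hf, Finset.sum_div]
      exact Finset.sum_congr rfl fun j _ => div_pow _ _ _
    calc x = f i₀ ^ 2 * (x / f i₀ ^ 2) := by field_simp
      _ = f i₀ ^ 2 * algebraMap O K y := by rw [hyK]
      _ = f i₀ ^ 2 * ∑ i, (algebraMap O K (b i)) ^ 2 := by
          rw [hb, map_sum]
          simp [map_pow]
      _ = ∑ i, (f i₀ * algebraMap O K (b i)) ^ 2 := by
          rw [Finset.mul_sum]
          exact Finset.sum_congr rfl fun i _ => by ring
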